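/- Consider a multi-criteria CIP with a fractional solution x* ∈ ℝ_{≥0}^n satisfying Ax* ≥ b, a parameter α > 1, reals λ_1, …, λ_ℓ > 0, positive integers k_i ≤ λ_i, and the function Φ as defined. Let p ∈ [0,1]^n with p_n ∈ (0,1) and Φ(p) > 0, let p' agree with p except p'_n = 0, and let p'' agree with p except p''_n = 1. Then Φ(p) ≤ p_n·Φ(p'') + (1 − p_n)·Φ(p'); in particular, Φ(p') > 0 or Φ(p'') > 0. -/

import Mathlib

/-- The generalized binomial coefficient `C(x, r) = x(x−1)⋯(x−r+1)/r!` for real `x`. -/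
noncomputable def genChoose (x : ℝ) (r : ℕ) : ℝ :=
  (∏ i ∈ Finset.range r, (x - i)) / (Nat.factorial r : ℝ)

/-- The quantity `δ_i = 1 − (b_i − A_i·s)/μ_i`, where `s_j = ⌊α x*_j⌋` and
`μ_i = Σ_j A_{i,j}(α x*_j − s_j)`. -/
noncomputable def cipDelta (m n : ℕ) (A : Fin m → Fin n → ℝ) (b : Fin m → ℝ)
    (x : Fin n → ℝ) (α : ℝ) (i : Fin m) : ℝ :=
  1 - (b i - ∑ j, A i j * (⌊α * x j⌋ : ℝ)) / (∑ j, A i j * (α * x j - ⌊α * x j⌋))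

/-- The function `ch_i(p) = (Π_j E[(1−δ_i)^{A_{i,j} X_j}]) / (1−δ_i)^{b_i − A_i·s}` for
independent `X_j ∈ {0,1}` with `Pr(X_j = 1) = p_j`; here
`E[(1−δ_i)^{A_{i,j} X_j}] = p_j (1−δ_i)^{A_{i,j}} + (1 − p_j)`. -/
noncomputable def cipCh (m n : ℕ) (A : Fin m → Fin n → ℝ) (b : Fin m → ℝ)
    (x : Fin n → ℝ) (α : ℝ) (p : Fin n → ℝ) (i : Fin m) : ℝ :=
  (∏ j, (p j * (1 - cipDelta m n A b x α i) ^ (A i j) + (1 - p j))) /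
    (1 - cipDelta m n A b x α i) ^ (b i - ∑ j, A i j * (⌊α * x j⌋ : ℝ))

/-- `ch'_i(p) = min{ch_i(p), 1}`. -/
noncomputable def cipCh' (m n : ℕ) (A : Fin m → Fin n → ℝ) (b : Fin m → ℝ)
    (x : Fin n → ℝ) (α : ℝ) (p : Fin n → ℝ) (i : Fin m) : ℝ :=
  min (cipCh m n A b x α p i) 1

/-- The function `Φ(p)` from Theorem (mult-cip):
`Φ(p) = Π_{r∈[m]} (1 − ch'_r(p)) − Σ_{i=1}^{ℓ} (1/C(λ_i,k_i)) · Σ_{j₁<…<j_{k_i}}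
(Π_t c_{i,j_t} p_{j_t}) · Π_{r ∉ R(j₁,…,j_{k_i})} (1 − ch'_r(p))`, where the inner sum
ranges over the `k_i`-element subsets of the columns and `R(T)` is the set of rows of `A`
with a nonzero coefficient on some column in `T`. -/
noncomputable def cipPhi (m n ℓ : ℕ) (A : Fin m → Fin n → ℝ) (b : Fin m → ℝ)
    (x : Fin n → ℝ) (α : ℝ) (c : Fin ℓ → Fin n → ℝ) (lam : Fin ℓ → ℝ) (k : Fin ℓ → ℕ)
    (p : Fin n → ℝ) : ℝ :=
  (∏ r, (1 - cipCh' m n A b x α p r)) -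
    ∑ i, (1 / genChoose (lam i) (k i)) *
      ∑ T ∈ Finset.univ.powersetCard (k i),
        (∏ j ∈ T, c i j * p j) *
          ∏ r ∈ Finset.univ.filter (fun r : Fin m => ∀ j ∈ T, A r j = 0),
            (1 - cipCh' m n A b x α p r)


lemma genChoose_pos' {x : ℝ} {r : ℕ} (h : (r : ℝ) ≤ x) :
    0 < (∏ i ∈ Finset.range r, (x - i)) / (Nat.factorial r : ℝ) := by
  apply div_pos
  · apply Finset.prod_pos
    intro i hi
    have : (i : ℝ) < r := by exact_mod_cast Finset.mem_range.mp hi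
    linarith
  · exact_mod_cast Nat.factorial_pos r

lemma chord_prod_aux {ι : Type*} [DecidableEq ι] (t : ℝ) (ht0 : 0 ≤ t) (ht1 : t ≤ 1)
    (u v f : ι → ℝ) (W : Finset ι)
    (hv0 : ∀ r ∈ W, 0 ≤ v r) (hvu : ∀ r ∈ W, v r ≤ u r)
    (hf0 : ∀ r ∈ W, 0 ≤ f r) (hfc : ∀ r ∈ W, f r ≤ t * u r + (1 - t) * v r)
    (a b : ℝ) (hb0 : 0 ≤ b) (hba : b ≤ a) :
    (t * a + (1 - t) * b) * ∏ r ∈ W, f r ≤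
      t * (a * ∏ r ∈ W, u r) + (1 - t) * (b * ∏ r ∈ W, v r) := by
  induction W using Finset.induction_on with
  | empty => simp only [Finset.prod_empty, mul_one]; nlinarith
  | @insert r W hrW ih =>
    have hvr := hv0 r (Finset.mem_insert_self r W)
    have hvur := hvu r (Finset.mem_insert_self r W)
    have hfr := hf0 r (Finset.mem_insert_self r W)
    have hfcr := hfc r (Finset.mem_insert_self r W)
    have ih' := ih (fun s hs => hv0 s (Finset.mem_insert_of_mem hs))
      (fun s hs => hvu s (Finset.mem_insert_of_mem hs))
      (fun s hs => hf0 s (Finset.mem_insert_of_mem hs))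
      (fun s hs => hfc s (Finset.mem_insert_of_mem hs))
    rw [Finset.prod_insert hrW, Finset.prod_insert hrW, Finset.prod_insert hrW]
    have hPv : 0 ≤ ∏ s ∈ W, v s :=
      Finset.prod_nonneg (fun s hs => hv0 s (Finset.mem_insert_of_mem hs))
    have hPuv : ∏ s ∈ W, v s ≤ ∏ s ∈ W, u s :=
      Finset.prod_le_prod (fun s hs => hv0 s (Finset.mem_insert_of_mem hs))
        (fun s hs => hvu s (Finset.mem_insert_of_mem hs))
    have hB0 : 0 ≤ b * ∏ s ∈ W, v s := mul_nonneg hb0 hPv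
    have hAB : b * ∏ s ∈ W, v s ≤ a * ∏ s ∈ W, u s :=
      mul_le_mul hba hPuv hPv (hb0.trans hba)
    have h1 : (t * a + (1 - t) * b) * (f r * ∏ s ∈ W, f s)
        ≤ f r * (t * (a * ∏ s ∈ W, u s) + (1 - t) * (b * ∏ s ∈ W, v s)) := by
      calc (t * a + (1 - t) * b) * (f r * ∏ s ∈ W, f s)
          = f r * ((t * a + (1 - t) * b) * ∏ s ∈ W, f s) := by ring
        _ ≤ _ := mul_le_mul_of_nonneg_left ih' hfr
    have h2 : f r * (t * (a * ∏ s ∈ W, u s) + (1 - t) * (b * ∏ s ∈ W, v s))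
        ≤ (t * u r + (1 - t) * v r) * (t * (a * ∏ s ∈ W, u s) + (1 - t) * (b * ∏ s ∈ W, v s)) := by
      apply mul_le_mul_of_nonneg_right hfcr
      nlinarith [mul_nonneg ht0 (hB0.trans hAB), mul_nonneg (by linarith : (0:ℝ) ≤ 1 - t) hB0]
    have h3 : (t * u r + (1 - t) * v r) * (t * (a * ∏ s ∈ W, u s) + (1 - t) * (b * ∏ s ∈ W, v s))
        ≤ t * (a * (u r * ∏ s ∈ W, u s)) + (1 - t) * (b * (v r * ∏ s ∈ W, v s)) := by
      nlinarith [mul_nonneg (mul_nonneg ht0 (by linarith : (0:ℝ) ≤ 1 - t))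
        (mul_nonneg (sub_nonneg.mpr hAB) (sub_nonneg.mpr hvur))]
    linarith

lemma chord_prod {ι : Type*} [DecidableEq ι] (t : ℝ) (ht0 : 0 ≤ t) (ht1 : t ≤ 1)
    (u v f : ι → ℝ) (U V : Finset ι) (hUV : U ⊆ V)
    (hv0 : ∀ r ∈ V, 0 ≤ v r) (hvu : ∀ r ∈ V, v r ≤ u r)
    (hf0 : ∀ r ∈ V, 0 ≤ f r) (hfc : ∀ r ∈ V, f r ≤ t * u r + (1 - t) * v r) :
    (t * ∏ r ∈ U, u r + (1 - t) * ∏ r ∈ U, v r) * ∏ r ∈ V, f r ≤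
      (t * ∏ r ∈ V, u r + (1 - t) * ∏ r ∈ V, v r) * ∏ r ∈ U, f r := by
  have key := chord_prod_aux t ht0 ht1 u v f (V \ U)
    (fun r hr => hv0 r (Finset.mem_sdiff.mp hr).1)
    (fun r hr => hvu r (Finset.mem_sdiff.mp hr).1)
    (fun r hr => hf0 r (Finset.mem_sdiff.mp hr).1)
    (fun r hr => hfc r (Finset.mem_sdiff.mp hr).1)
    (∏ r ∈ U, u r) (∏ r ∈ U, v r)
    (Finset.prod_nonneg (fun r hr => hv0 r (hUV hr)))
    (Finset.prod_le_prod (fun r hr => hv0 r (hUV hr)) (fun r hr => hvu r (hUV hr)))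
  have hUf : 0 ≤ ∏ r ∈ U, f r := Finset.prod_nonneg (fun r hr => hf0 r (hUV hr))
  have key2 := mul_le_mul_of_nonneg_right key hUf
  rw [← Finset.prod_sdiff hUV (f := f), ← Finset.prod_sdiff hUV (f := u),
    ← Finset.prod_sdiff hUV (f := v)]
  refine le_trans (le_of_eq (by ring)) (le_trans key2 (le_of_eq (by ring)))



lemma main_aux {m ℓ : ℕ} {τ : Type*} (t : ℝ) (ht0 : 0 < t) (ht1 : t < 1)
    (f u v : Fin m → ℝ) (C : Fin ℓ → ℝ) (TT : Fin ℓ → Finset τ)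
    (K K' K'' : Fin ℓ → τ → ℝ) (U : τ → Finset (Fin m))
    (hv0 : ∀ r, 0 ≤ v r) (hvu : ∀ r, v r ≤ u r) (hf0 : ∀ r, 0 < f r)
    (hfc : ∀ r, f r ≤ t * u r + (1 - t) * v r)
    (hC : ∀ i, 0 ≤ C i) (hK0 : ∀ i T, 0 ≤ K i T)
    (hcase : ∀ i : Fin ℓ, ∀ T ∈ TT i,
      (K i T = t * K'' i T ∧ K' i T = 0 ∧ ∀ r ∈ U T, u r = f r ∧ v r = f r) ∨
      (K' i T = K i T ∧ K'' i T = K i T))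
    (hpos : 0 < (∏ r, f r) - ∑ i, C i * ∑ T ∈ TT i, K i T * ∏ r ∈ U T, f r) :
    (∏ r, f r) - ∑ i, C i * ∑ T ∈ TT i, K i T * ∏ r ∈ U T, f r ≤
      t * ((∏ r, u r) - ∑ i, C i * ∑ T ∈ TT i, K'' i T * ∏ r ∈ U T, u r) +
        (1 - t) * ((∏ r, v r) - ∑ i, C i * ∑ T ∈ TT i, K' i T * ∏ r ∈ U T, v r) := by
  have hPF : 0 < ∏ r, f r := Finset.prod_pos (fun r _ => hf0 r)
  have hchord : ∀ W : Finset (Fin m),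
      (t * ∏ r ∈ W, u r + (1 - t) * ∏ r ∈ W, v r) * ∏ r, f r ≤
        (t * ∏ r, u r + (1 - t) * ∏ r, v r) * ∏ r ∈ W, f r := fun W =>
    chord_prod t ht0.le ht1.le u v f W Finset.univ (Finset.subset_univ W)
      (fun r _ => hv0 r) (fun r _ => hvu r) (fun r _ => (hf0 r).le) (fun r _ => hfc r)
  have hE : (∏ r, f r) - (t * ∏ r, u r + (1 - t) * ∏ r, v r) ≤ 0 := by
    have h := hchord ∅
    simp only [Finset.prod_empty, mul_one] at h
    nlinarith [h]
  have hEPF : ((∏ r, f r) - (t * ∏ r, u r + (1 - t) * ∏ r, v r)) / (∏ r, f r) ≤ 0 := by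
    exact div_nonpos_iff.mpr (Or.inr ⟨hE, hPF.le⟩)
  have hterm : ∀ i : Fin ℓ, ∀ T ∈ TT i,
      (K i T * ∏ r ∈ U T, f r) *
          (((∏ r, f r) - (t * ∏ r, u r + (1 - t) * ∏ r, v r)) / (∏ r, f r)) ≤
        K i T * (∏ r ∈ U T, f r) - t * (K'' i T * ∏ r ∈ U T, u r)
          - (1 - t) * (K' i T * ∏ r ∈ U T, v r) := by
    intro i T hT
    have hPf0 : 0 ≤ ∏ r ∈ U T, f r := Finset.prod_nonneg fun r _ => (hf0 r).le
    rcases hcase i T hT with ⟨h1, h2, h3⟩ | ⟨h1, h2⟩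
    · have hu : ∏ r ∈ U T, u r = ∏ r ∈ U T, f r :=
        Finset.prod_congr rfl fun r hr => (h3 r hr).1
      have hv' : ∏ r ∈ U T, v r = ∏ r ∈ U T, f r :=
        Finset.prod_congr rfl fun r hr => (h3 r hr).2
      rw [h1, h2, hu, hv']
      have hq : 0 ≤ t * K'' i T * ∏ r ∈ U T, f r := by
        have hk := hK0 i T
        rw [h1] at hk
        exact mul_nonneg hk hPf0
      have hle : t * K'' i T * (∏ r ∈ U T, f r) *
          (((∏ r, f r) - (t * ∏ r, u r + (1 - t) * ∏ r, v r)) / (∏ r, f r)) ≤ 0 :=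
        mul_nonpos_iff.mpr (Or.inl ⟨hq, hEPF⟩)
      nlinarith [hle]
    · rw [h1, h2]
      have hch := hchord (U T)
      have hcore : (∏ r ∈ U T, f r) *
          (((∏ r, f r) - (t * ∏ r, u r + (1 - t) * ∏ r, v r)) / (∏ r, f r)) ≤
          (∏ r ∈ U T, f r) - t * (∏ r ∈ U T, u r) - (1 - t) * (∏ r ∈ U T, v r) := by
        rw [← mul_div_assoc, div_le_iff₀ hPF]
        nlinarith [hch]
      have := mul_le_mul_of_nonneg_left hcore (hK0 i T)
      nlinarith [this]
  have hinner : ∀ i : Fin ℓ,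
      (∑ T ∈ TT i, K i T * ∏ r ∈ U T, f r) *
          (((∏ r, f r) - (t * ∏ r, u r + (1 - t) * ∏ r, v r)) / (∏ r, f r)) ≤
        (∑ T ∈ TT i, K i T * ∏ r ∈ U T, f r)
          - t * (∑ T ∈ TT i, K'' i T * ∏ r ∈ U T, u r)
          - (1 - t) * (∑ T ∈ TT i, K' i T * ∏ r ∈ U T, v r) := by
    intro i
    rw [Finset.sum_mul, Finset.mul_sum, Finset.mul_sum, ← Finset.sum_sub_distrib,
      ← Finset.sum_sub_distrib]
    exact Finset.sum_le_sum (fun T hT => hterm i T hT)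
  have houter : (∑ i, C i * ∑ T ∈ TT i, K i T * ∏ r ∈ U T, f r) *
        (((∏ r, f r) - (t * ∏ r, u r + (1 - t) * ∏ r, v r)) / (∏ r, f r)) ≤
      (∑ i, C i * ∑ T ∈ TT i, K i T * ∏ r ∈ U T, f r)
        - t * (∑ i, C i * ∑ T ∈ TT i, K'' i T * ∏ r ∈ U T, u r)
        - (1 - t) * (∑ i, C i * ∑ T ∈ TT i, K' i T * ∏ r ∈ U T, v r) := by
    rw [Finset.sum_mul, Finset.mul_sum, Finset.mul_sum, ← Finset.sum_sub_distrib,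
      ← Finset.sum_sub_distrib]
    refine Finset.sum_le_sum fun i _ => ?_
    nlinarith [mul_le_mul_of_nonneg_left (hinner i) (hC i)]
  have hSple : (∑ i, C i * ∑ T ∈ TT i, K i T * ∏ r ∈ U T, f r) ≤ ∏ r, f r := by linarith
  have hid : (∏ r, f r) *
      (((∏ r, f r) - (t * ∏ r, u r + (1 - t) * ∏ r, v r)) / (∏ r, f r)) =
      (∏ r, f r) - (t * ∏ r, u r + (1 - t) * ∏ r, v r) := by
    field_simp
  have hfin := mul_le_mul_of_nonpos_right hSple hEPF
  nlinarith [houter, hfin, hid]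


/-- Consider a multi-criteria CIP with fractional solution `x* ≥ 0`,
`Ax* ≥ b`, `α > 1`, reals `λ_i > 0`, positive integers `k_i ≤ λ_i`, and `Φ` as defined.
Let `p ∈ [0,1]^n` with `p_n ∈ (0,1)` and `Φ(p) > 0` (`n` being the last column index), and
let `p'`, `p''` agree with `p` except `p'_n = 0`, `p''_n = 1`. Then
`Φ(p) ≤ p_n·Φ(p'') + (1−p_n)·Φ(p')`; in particular `Φ(p') > 0` or `Φ(p'') > 0`. -/
theorem cip_phi_convexity
    (m n ℓ : ℕ)
    (A : Fin m → Fin (n + 1) → ℝ) (hA : ∀ i j, A i j ∈ Set.Icc (0 : ℝ) 1)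
    (b : Fin m → ℝ) (hb : ∀ i, 1 ≤ b i)
    (c : Fin ℓ → Fin (n + 1) → ℝ) (hc : ∀ i j, c i j ∈ Set.Icc (0 : ℝ) 1)
    (hcmax : ∀ i, ∃ j, c i j = 1)
    (x : Fin (n + 1) → ℝ) (hx : ∀ j, 0 ≤ x j)
    (hAx : ∀ i, b i ≤ ∑ j, A i j * x j)
    (α : ℝ) (hα : 1 < α)
    (hδ : ∀ i, cipDelta m (n + 1) A b x α i ∈ Set.Ioo (0 : ℝ) 1)
    (lam : Fin ℓ → ℝ) (hlam : ∀ i, 0 < lam i)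
    (k : Fin ℓ → ℕ) (hkpos : ∀ i, 0 < k i) (hk : ∀ i, (k i : ℝ) ≤ lam i)
    (p : Fin (n + 1) → ℝ) (hp : ∀ j, p j ∈ Set.Icc (0 : ℝ) 1)
    (hpn : p (Fin.last n) ∈ Set.Ioo (0 : ℝ) 1)
    (hΦpos : 0 < cipPhi m (n + 1) ℓ A b x α c lam k p)
    (p' p'' : Fin (n + 1) → ℝ)
    (hp' : p' = Function.update p (Fin.last n) 0)
    (hp'' : p'' = Function.update p (Fin.last n) 1) :
    cipPhi m (n + 1) ℓ A b x α c lam k p ≤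
        p (Fin.last n) * cipPhi m (n + 1) ℓ A b x α c lam k p'' +
          (1 - p (Fin.last n)) * cipPhi m (n + 1) ℓ A b x α c lam k p' ∧
      (0 < cipPhi m (n + 1) ℓ A b x α c lam k p' ∨
        0 < cipPhi m (n + 1) ℓ A b x α c lam k p'') := by
  obtain ⟨ht0, ht1⟩ := hpn
  -- basic facts about cipCh along the last coordinate
  have crunch : ∀ r : Fin m,
      cipCh m (n + 1) A b x α p r =
        p (Fin.last n) * cipCh m (n + 1) A b x α p'' r +
          (1 - p (Fin.last n)) * cipCh m (n + 1) A b x α p' r ∧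
      cipCh m (n + 1) A b x α p'' r ≤ cipCh m (n + 1) A b x α p' r ∧
      (A r (Fin.last n) = 0 →
        cipCh m (n + 1) A b x α p'' r = cipCh m (n + 1) A b x α p r ∧
        cipCh m (n + 1) A b x α p' r = cipCh m (n + 1) A b x α p r) := by
    intro r
    obtain ⟨hd0, hd1⟩ := hδ r
    have hD0 : (0:ℝ) < 1 - cipDelta m (n + 1) A b x α r := by linarith
    have hD1 : 1 - cipDelta m (n + 1) A b x α r ≤ 1 := by linarith
    have hden : 0 < (1 - cipDelta m (n + 1) A b x α r) ^
        (b r - ∑ j, A r j * (⌊α * x j⌋ : ℝ)) := Real.rpow_pos_of_pos hD0 _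
    have hsplit : ∀ q : Fin (n + 1) → ℝ,
        cipCh m (n + 1) A b x α q r =
          ((∏ j : Fin n, (q j.castSucc *
              (1 - cipDelta m (n + 1) A b x α r) ^ (A r j.castSucc) + (1 - q j.castSucc))) *
            (q (Fin.last n) * (1 - cipDelta m (n + 1) A b x α r) ^ (A r (Fin.last n)) +
              (1 - q (Fin.last n)))) /
            ((1 - cipDelta m (n + 1) A b x α r) ^ (b r - ∑ j, A r j * (⌊α * x j⌋ : ℝ))) := by
      intro q
      simp only [cipCh]
      rw [Fin.prod_univ_castSucc]
    have hpc' : ∀ j : Fin n, p' j.castSucc = p j.castSucc := fun j => by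
      rw [hp']; exact Function.update_of_ne (Fin.castSucc_lt_last j).ne _ _
    have hpc'' : ∀ j : Fin n, p'' j.castSucc = p j.castSucc := fun j => by
      rw [hp'']; exact Function.update_of_ne (Fin.castSucc_lt_last j).ne _ _
    have hP'L : p' (Fin.last n) = 0 := by rw [hp']; exact Function.update_self _ _ _
    have hP''L : p'' (Fin.last n) = 1 := by rw [hp'']; exact Function.update_self _ _ _
    have hPPeq' : (∏ j : Fin n, (p' j.castSucc *
          (1 - cipDelta m (n + 1) A b x α r) ^ (A r j.castSucc) + (1 - p' j.castSucc))) =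
        ∏ j : Fin n, (p j.castSucc *
          (1 - cipDelta m (n + 1) A b x α r) ^ (A r j.castSucc) + (1 - p j.castSucc)) :=
      Finset.prod_congr rfl fun j _ => by rw [hpc' j]
    have hPPeq'' : (∏ j : Fin n, (p'' j.castSucc *
          (1 - cipDelta m (n + 1) A b x α r) ^ (A r j.castSucc) + (1 - p'' j.castSucc))) =
        ∏ j : Fin n, (p j.castSucc *
          (1 - cipDelta m (n + 1) A b x α r) ^ (A r j.castSucc) + (1 - p j.castSucc)) :=
      Finset.prod_congr rfl fun j _ => by rw [hpc'' j]
    have hPP0 : 0 ≤ ∏ j : Fin n, (p j.castSucc *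
        (1 - cipDelta m (n + 1) A b x α r) ^ (A r j.castSucc) + (1 - p j.castSucc)) :=
      Finset.prod_nonneg fun j _ => add_nonneg
        (mul_nonneg (hp j.castSucc).1 (Real.rpow_pos_of_pos hD0 _).le)
        (by linarith [(hp j.castSucc).2])
    have hDA1 : (1 - cipDelta m (n + 1) A b x α r) ^ (A r (Fin.last n)) ≤ 1 :=
      Real.rpow_le_one hD0.le hD1 (hA r (Fin.last n)).1
    have hDA0 : 0 < (1 - cipDelta m (n + 1) A b x α r) ^ (A r (Fin.last n)) :=
      Real.rpow_pos_of_pos hD0 _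
    refine ⟨?_, ?_, ?_⟩
    · rw [hsplit p, hsplit p', hsplit p'', hPPeq', hPPeq'', hP'L, hP''L]
      field_simp
      ring
    · rw [hsplit p', hsplit p'', hPPeq', hPPeq'', hP'L, hP''L]
      rw [div_le_div_iff_of_pos_right hden]
      nlinarith [hPP0, hDA1, hDA0]
    · intro hA0
      rw [hsplit p, hsplit p', hsplit p'', hPPeq', hPPeq'', hP'L, hP''L, hA0, Real.rpow_zero]
      constructor <;> ring
  have hch'le : ∀ (q : Fin (n + 1) → ℝ) (r : Fin m), cipCh' m (n + 1) A b x α q r ≤ 1 :=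
    fun q r => min_le_right _ _
  have hCpos : ∀ i : Fin ℓ, 0 ≤ 1 / genChoose (lam i) (k i) := by
    intro i
    have h : 0 < genChoose (lam i) (k i) := by unfold genChoose; exact genChoose_pos' (hk i)
    positivity
  have hmain : cipPhi m (n + 1) ℓ A b x α c lam k p ≤
      p (Fin.last n) * cipPhi m (n + 1) ℓ A b x α c lam k p'' +
        (1 - p (Fin.last n)) * cipPhi m (n + 1) ℓ A b x α c lam k p' := by
    simp only [cipPhi] at hΦpos ⊢
    have hSnn : 0 ≤ ∑ i, 1 / genChoose (lam i) (k i) *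
        ∑ T ∈ Finset.univ.powersetCard (k i),
          (∏ j ∈ T, c i j * p j) *
            ∏ r ∈ Finset.univ.filter (fun r : Fin m => ∀ j ∈ T, A r j = 0),
              (1 - cipCh' m (n + 1) A b x α p r) :=
      Finset.sum_nonneg fun i _ => mul_nonneg (hCpos i) <| Finset.sum_nonneg fun T _ =>
        mul_nonneg (Finset.prod_nonneg fun j _ => mul_nonneg (hc i j).1 (hp j).1)
          (Finset.prod_nonneg fun r _ => by linarith [hch'le p r])
    have hPF : 0 < ∏ r, (1 - cipCh' m (n + 1) A b x α p r) := by linarith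
    have hfpos : ∀ r : Fin m, 0 < 1 - cipCh' m (n + 1) A b x α p r := by
      intro r
      by_contra hle
      push_neg at hle
      have h0 : 1 - cipCh' m (n + 1) A b x α p r = 0 :=
        le_antisymm hle (by linarith [hch'le p r])
      have hz : ∏ r' : Fin m, (1 - cipCh' m (n + 1) A b x α p r') = 0 :=
        Finset.prod_eq_zero (Finset.mem_univ r) h0
      rw [hz] at hPF
      exact lt_irrefl 0 hPF
    have hch'p : ∀ r : Fin m, cipCh' m (n + 1) A b x α p r = cipCh m (n + 1) A b x α p r := by
      intro r
      apply min_eq_left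
      by_contra h
      push_neg at h
      have h2 := hfpos r
      simp only [cipCh'] at h2
      rw [min_eq_right h.le] at h2
      linarith
    refine main_aux (p (Fin.last n)) ht0 ht1
      (fun r => 1 - cipCh' m (n + 1) A b x α p r)
      (fun r => 1 - cipCh' m (n + 1) A b x α p'' r)
      (fun r => 1 - cipCh' m (n + 1) A b x α p' r)
      (fun i => 1 / genChoose (lam i) (k i))
      (fun i => Finset.univ.powersetCard (k i))
      (fun i T => ∏ j ∈ T, c i j * p j)
      (fun i T => ∏ j ∈ T, c i j * p' j)
      (fun i T => ∏ j ∈ T, c i j * p'' j)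
      (fun T => Finset.univ.filter (fun r : Fin m => ∀ j ∈ T, A r j = 0))
      ?_ ?_ ?_ ?_ ?_ ?_ ?_ ?_
    · intro r
      linarith [hch'le p' r]
    · intro r
      simp only [cipCh']
      linarith [min_le_min (crunch r).2.1 (le_refl (1:ℝ))]
    · exact hfpos
    · intro r
      rw [hch'p r, (crunch r).1]
      simp only [cipCh']
      nlinarith [mul_nonneg ht0.le
          (sub_nonneg.mpr (min_le_left (cipCh m (n + 1) A b x α p'' r) 1)),
        mul_nonneg (by linarith : (0:ℝ) ≤ 1 - p (Fin.last n))
          (sub_nonneg.mpr (min_le_left (cipCh m (n + 1) A b x α p' r) 1))]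
    · exact hCpos
    · intro i T
      exact Finset.prod_nonneg fun j _ => mul_nonneg (hc i j).1 (hp j).1
    · intro i T hT
      by_cases hL : Fin.last n ∈ T
      · left
        refine ⟨?_, ?_, ?_⟩
        · rw [← Finset.mul_prod_erase T _ hL, ← Finset.mul_prod_erase T _ hL]
          have herase : ∏ j ∈ T.erase (Fin.last n), c i j * p'' j =
              ∏ j ∈ T.erase (Fin.last n), c i j * p j :=
            Finset.prod_congr rfl fun j hj => by
              rw [hp'', Function.update_of_ne (Finset.ne_of_mem_erase hj)]
          rw [herase, hp'', Function.update_self]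
          ring
        · apply Finset.prod_eq_zero hL
          rw [hp', Function.update_self]
          ring
        · intro r hr
          have hAr : A r (Fin.last n) = 0 := (Finset.mem_filter.mp hr).2 _ hL
          obtain ⟨e1, e2⟩ := (crunch r).2.2 hAr
          constructor
          · simp only [cipCh']
            rw [e1]
          · simp only [cipCh']
            rw [e2]
      · right
        constructor
        · refine Finset.prod_congr rfl fun j hj => ?_
          have hj' : j ≠ Fin.last n := fun h => hL (h ▸ hj)
          rw [hp', Function.update_of_ne hj']
        · refine Finset.prod_congr rfl fun j hj => ?_
          have hj' : j ≠ Fin.last n := fun h => hL (h ▸ hj)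
          rw [hp'', Function.update_of_ne hj']
    · exact hΦpos
  refine ⟨hmain, ?_⟩
  by_contra hcon
  push_neg at hcon
  obtain ⟨h1, h2⟩ := hcon
  nlinarith [hmain, hΦpos, mul_nonneg ht0.le (neg_nonneg.mpr h2),
    mul_nonneg (by linarith : (0:ℝ) ≤ 1 - p (Fin.last n)) (neg_nonneg.mpr h1)]
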